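/- Let d ≥ 1, n ≥ 2, and let A : [n]^d → ℝ. Define A' : [n−1]^d → ℝ by A'[i] = Σ_{j ∈ B_d} (−1)^{‖j‖₁} · A[i + j]. Then the maximum over i ∈ [n−1]^d and δ ∈ ℕ^d with i_r + δ_r ≤ n−1 for all r of the box sum Σ_{k : i_r ≤ k_r ≤ i_r+δ_r for all r} A'[k] equals the maximum over i ∈ [n−1]^d and d-tuples δ' of positive integers with i_r + δ'_r ≤ n for all r of Σ_{j ∈ B_d} (−1)^{‖j‖₁} · A[i + δ'×j]. -/

import Mathlib

private lemma fin2_cases (v : Fin 2) : v = 0 ∨ v = 1 := by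
  rcases v with ⟨(_ | _ | n), h⟩
  · exact Or.inl rfl
  · exact Or.inr rfl
  · omega

private lemma flipflip (v : Fin 2) : 1 - (1 - v) = v := by
  rcases fin2_cases v with h | h <;> subst h <;> decide

private lemma flipne (v : Fin 2) : 1 - v ≠ v := by
  rcases fin2_cases v with h | h <;> subst h <;> decide

private lemma sgn_update {d : ℕ} (j : Fin d → Fin 2) (r : Fin d) :
    (-1 : ℝ) ^ (∑ s, ((Function.update j r (1 - j r)) s).val)
      = -(-1 : ℝ) ^ (∑ s, (j s).val) := by
  rw [← Finset.add_sum_erase _ (fun s => ((Function.update j r (1 - j r)) s).val)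
        (Finset.mem_univ r),
      ← Finset.add_sum_erase _ (fun s => (j s).val) (Finset.mem_univ r)]
  have he : ∑ s ∈ Finset.univ.erase r, ((Function.update j r (1 - j r)) s).val
      = ∑ s ∈ Finset.univ.erase r, (j s).val :=
    Finset.sum_congr rfl fun s hs => by
      rw [Function.update_of_ne (Finset.ne_of_mem_erase hs)]
  rw [he, Function.update_self]
  rcases fin2_cases (j r) with hv | hv <;> rw [hv] <;>
    norm_num [pow_add, pow_succ]

private lemma step_sum {d : ℕ} (F : (Fin d → ℕ) → ℝ) (r : Fin d) (i δ : Fin d → ℕ)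
    (hr : 1 ≤ δ r) :
    (∑ j : Fin d → Fin 2, (-1 : ℝ) ^ (∑ s, (j s).val) *
        F (fun s => i s + (Function.update δ r (δ r - 1) s + 1) * (j s).val))
    + (∑ j : Fin d → Fin 2, (-1 : ℝ) ^ (∑ s, (j s).val) *
        F (fun s => Function.update i r (i r + δ r) s + (Function.update δ r 0 s + 1) * (j s).val))
    = ∑ j : Fin d → Fin 2, (-1 : ℝ) ^ (∑ s, (j s).val) *
        F (fun s => i s + (δ s + 1) * (j s).val) := by
  rw [← Finset.sum_add_distrib, ← sub_eq_zero, ← Finset.sum_sub_distrib]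
  refine Finset.sum_ninvolution (fun j => Function.update j r (1 - j r)) ?_ ?_
    (fun _ => Finset.mem_univ _) ?_
  · intro j
    beta_reduce
    rw [sgn_update j r]
    rcases fin2_cases (j r) with hv | hv
    · have h10 : (1 : Fin 2) - 0 = 1 := by decide
      rw [hv, h10]
      have hE3 : (fun s => i s + (δ s + 1) * (j s).val)
          = fun s => i s + (Function.update δ r (δ r - 1) s + 1) * (j s).val := by
        funext s
        rcases eq_or_ne s r with rfl | hs
        · simp [hv]
        · simp [Function.update_of_ne hs]
      have hE1 : (fun s => i s + (Function.update δ r (δ r - 1) s + 1) *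
              ((Function.update j r 1) s).val)
          = fun s => Function.update i r (i r + δ r) s +
              (Function.update δ r 0 s + 1) * (j s).val := by
        funext s
        rcases eq_or_ne s r with rfl | hs
        · simp [hv]; omega
        · simp [Function.update_of_ne hs]
      have hE2 : (fun s => Function.update i r (i r + δ r) s +
              (Function.update δ r 0 s + 1) * ((Function.update j r 1) s).val)
          = fun s => i s + (δ s + 1) * ((Function.update j r 1) s).val := by
        funext s
        rcases eq_or_ne s r with rfl | hs
        · simp; omega
        · simp [Function.update_of_ne hs]
      rw [hE3, hE1, hE2]
      ring
    · have h01 : (1 : Fin 2) - 1 = 0 := by decide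
      rw [hv, h01]
      have hB3 : (fun s => i s + (δ s + 1) * (j s).val)
          = fun s => Function.update i r (i r + δ r) s +
              (Function.update δ r 0 s + 1) * (j s).val := by
        funext s
        rcases eq_or_ne s r with rfl | hs
        · simp [hv]; omega
        · simp [Function.update_of_ne hs]
      have hB1 : (fun s => i s + (Function.update δ r (δ r - 1) s + 1) *
              ((Function.update j r 0) s).val)
          = fun s => i s + (δ s + 1) * ((Function.update j r 0) s).val := by
        funext s
        rcases eq_or_ne s r with rfl | hs
        · simp
        · simp [Function.update_of_ne hs]
      have hB2 : (fun s => Function.update i r (i r + δ r) s +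
              (Function.update δ r 0 s + 1) * ((Function.update j r 0) s).val)
          = fun s => i s + (Function.update δ r (δ r - 1) s + 1) * (j s).val := by
        funext s
        rcases eq_or_ne s r with rfl | hs
        · simp [hv]; omega
        · simp [Function.update_of_ne hs]
      rw [hB3, hB1, hB2]
      ring
  · intro j _ hEq
    have h2 : Function.update j r (1 - j r) = j := hEq
    have h3 := congrFun h2 r
    rw [Function.update_self] at h3
    exact flipne (j r) h3
  · intro j
    show Function.update (Function.update j r (1 - j r)) r
        (1 - Function.update j r (1 - j r) r) = j
    rw [Function.update_self, flipflip, Function.update_idem, Function.update_eq_self]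

private lemma key0 {d : ℕ} (F : (Fin d → ℕ) → ℝ) (i δ : Fin d → ℕ) (h0 : ∀ r, δ r = 0) :
    (∑ k ∈ Finset.Icc i (fun r => i r + δ r),
        ∑ j : Fin d → Fin 2, (-1 : ℝ) ^ (∑ r, (j r).val) * F (fun r => k r + (j r).val))
    = ∑ j : Fin d → Fin 2, (-1 : ℝ) ^ (∑ r, (j r).val) *
        F (fun r => i r + (δ r + 1) * (j r).val) := by
  have hfi : (fun r => i r + δ r) = i := funext fun r => by rw [h0 r, add_zero]
  rw [hfi, Finset.Icc_self, Finset.sum_singleton]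
  refine Finset.sum_congr rfl fun j _ => ?_
  have : (fun s => i s + (δ s + 1) * (j s).val) = fun s => i s + (j s).val :=
    funext fun s => by rw [h0 s]; ring
  rw [this]

private lemma key {d : ℕ} (F : (Fin d → ℕ) → ℝ) (N : ℕ) :
    ∀ i δ : Fin d → ℕ, (∑ r, δ r) ≤ N →
    (∑ k ∈ Finset.Icc i (fun r => i r + δ r),
        ∑ j : Fin d → Fin 2, (-1 : ℝ) ^ (∑ r, (j r).val) * F (fun r => k r + (j r).val))
    = ∑ j : Fin d → Fin 2, (-1 : ℝ) ^ (∑ r, (j r).val) *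
        F (fun r => i r + (δ r + 1) * (j r).val) := by
  induction N with
  | zero =>
    intro i δ hle
    refine key0 F i δ fun r => ?_
    have : δ r ≤ ∑ s, δ s := Finset.single_le_sum (fun s _ => Nat.zero_le _) (Finset.mem_univ r)
    omega
  | succ N IH =>
    intro i δ hle
    by_cases h0 : ∀ r, δ r = 0
    · exact key0 F i δ h0
    · push_neg at h0
      obtain ⟨r, hr⟩ := h0
      have hr1 : 1 ≤ δ r := Nat.one_le_iff_ne_zero.mpr hr
      have hsplit : Finset.Icc i (fun s => i s + δ s)
          = Finset.Icc i (fun s => i s + Function.update δ r (δ r - 1) s)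
            ∪ Finset.Icc (Function.update i r (i r + δ r))
                (fun s => Function.update i r (i r + δ r) s + Function.update δ r 0 s) := by
        ext k
        simp only [Finset.mem_union, Finset.mem_Icc, Pi.le_def]
        constructor
        · rintro ⟨h1, h2⟩
          by_cases hk : k r ≤ i r + (δ r - 1)
          · refine Or.inl ⟨h1, fun s => ?_⟩
            rcases eq_or_ne s r with rfl | hs
            · rwa [Function.update_self]
            · rw [Function.update_of_ne hs]; exact h2 s
          · refine Or.inr ⟨fun s => ?_, fun s => ?_⟩ <;>
              rcases eq_or_ne s r with rfl | hs
            · rw [Function.update_self]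
              have := h2 s; omega
            · rw [Function.update_of_ne hs]; exact h1 s
            · rw [Function.update_self, Function.update_self]
              have := h2 s; omega
            · rw [Function.update_of_ne hs, Function.update_of_ne hs]; exact h2 s
        · rintro (⟨h1, h2⟩ | ⟨h1, h2⟩) <;> refine ⟨fun s => ?_, fun s => ?_⟩
          · exact h1 s
          · have := h2 s
            rcases eq_or_ne s r with rfl | hs
            · rw [Function.update_self] at this; omega
            · rwa [Function.update_of_ne hs] at this
          · have := h1 s
            rcases eq_or_ne s r with rfl | hs
            · rw [Function.update_self] at this; omega
            · rwa [Function.update_of_ne hs] at this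
          · have := h2 s
            rcases eq_or_ne s r with rfl | hs
            · rw [Function.update_self, Function.update_self] at this; omega
            · rwa [Function.update_of_ne hs, Function.update_of_ne hs] at this
      have hdisj : Disjoint
          (Finset.Icc i (fun s => i s + Function.update δ r (δ r - 1) s))
          (Finset.Icc (Function.update i r (i r + δ r))
            (fun s => Function.update i r (i r + δ r) s + Function.update δ r 0 s)) := by
        rw [Finset.disjoint_left]
        intro k hk1 hk2
        rw [Finset.mem_Icc] at hk1 hk2
        have b1 := Pi.le_def.mp hk1.2 r
        have b2 := Pi.le_def.mp hk2.1 r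
        rw [Function.update_self] at b1 b2
        omega
      have htot : ∑ s, δ s = δ r + ∑ s ∈ Finset.univ \ {r}, δ s :=
        Finset.sum_eq_add_sum_sdiff_singleton_of_mem (Finset.mem_univ r) δ
      have hsum1 : ∑ s, Function.update δ r (δ r - 1) s ≤ N := by
        rw [Finset.sum_update_of_mem (Finset.mem_univ r)]
        omega
      have hsum2 : ∑ s, Function.update δ r 0 s ≤ N := by
        rw [Finset.sum_update_of_mem (Finset.mem_univ r)]
        omega
      rw [hsplit, Finset.sum_union hdisj,
        IH i (Function.update δ r (δ r - 1)) hsum1,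
        IH (Function.update i r (i r + δ r)) (Function.update δ r 0) hsum2]
      exact step_sum F r i δ hr1

theorem stmt_9 (d n : ℕ) (hd : 1 ≤ d) (hn : 2 ≤ n)
    (A A' : (Fin d → ℕ) → ℝ)
    (hA' : ∀ i : Fin d → ℕ, (∀ r, 1 ≤ i r ∧ i r ≤ n - 1) →
      A' i = ∑ j : Fin d → Fin 2, (-1 : ℝ) ^ (∑ r, (j r).val) *
        A (fun r => i r + (j r).val)) :
    sSup {x : ℝ | ∃ i δ : Fin d → ℕ,
        (∀ r, 1 ≤ i r ∧ i r ≤ n - 1) ∧ (∀ r, i r + δ r ≤ n - 1) ∧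
        x = ∑ k ∈ Finset.Icc i (fun r => i r + δ r), A' k}
      = sSup {x : ℝ | ∃ i δ' : Fin d → ℕ,
          (∀ r, 1 ≤ i r ∧ i r ≤ n - 1) ∧ (∀ r, 1 ≤ δ' r) ∧ (∀ r, i r + δ' r ≤ n) ∧
          x = ∑ j : Fin d → Fin 2, (-1 : ℝ) ^ (∑ r, (j r).val) *
                A (fun r => i r + δ' r * (j r).val)} := by
  have hbox : ∀ (i δ : Fin d → ℕ), (∀ r, 1 ≤ i r ∧ i r ≤ n - 1) → (∀ r, i r + δ r ≤ n - 1) →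
      (∑ k ∈ Finset.Icc i (fun r => i r + δ r), A' k)
      = ∑ j : Fin d → Fin 2, (-1 : ℝ) ^ (∑ r, (j r).val) *
          A (fun r => i r + (δ r + 1) * (j r).val) := by
    intro i δ h1 h2
    have hform : ∀ k ∈ Finset.Icc i (fun r => i r + δ r),
        A' k = ∑ j : Fin d → Fin 2, (-1 : ℝ) ^ (∑ r, (j r).val) *
          A (fun r => k r + (j r).val) := by
      intro k hk
      rw [Finset.mem_Icc] at hk
      refine hA' k fun r => ?_
      have l1 := Pi.le_def.mp hk.1 r
      have l2 := Pi.le_def.mp hk.2 r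
      have := h1 r
      have := h2 r
      omega
    rw [Finset.sum_congr rfl hform, key A (∑ s, δ s) i δ le_rfl]
  have hset : {x : ℝ | ∃ i δ : Fin d → ℕ,
        (∀ r, 1 ≤ i r ∧ i r ≤ n - 1) ∧ (∀ r, i r + δ r ≤ n - 1) ∧
        x = ∑ k ∈ Finset.Icc i (fun r => i r + δ r), A' k}
      = {x : ℝ | ∃ i δ' : Fin d → ℕ,
          (∀ r, 1 ≤ i r ∧ i r ≤ n - 1) ∧ (∀ r, 1 ≤ δ' r) ∧ (∀ r, i r + δ' r ≤ n) ∧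
          x = ∑ j : Fin d → Fin 2, (-1 : ℝ) ^ (∑ r, (j r).val) *
                A (fun r => i r + δ' r * (j r).val)} := by
    ext x
    simp only [Set.mem_setOf_eq]
    constructor
    · rintro ⟨i, δ, h1, h2, rfl⟩
      refine ⟨i, fun r => δ r + 1, h1, fun r => Nat.le_add_left 1 (δ r),
        fun r => by show i r + (δ r + 1) ≤ n; have := h2 r; omega, ?_⟩
      rw [hbox i δ h1 h2]
    · rintro ⟨i, δ', h1, hδ1, hδn, rfl⟩
      refine ⟨i, fun r => δ' r - 1, h1,
        fun r => by show i r + (δ' r - 1) ≤ n - 1; have := hδn r; have := hδ1 r; omega, ?_⟩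
      rw [hbox i (fun r => δ' r - 1) h1
        (fun r => by show i r + (δ' r - 1) ≤ n - 1; have := hδn r; have := hδ1 r; omega)]
      refine Finset.sum_congr rfl fun j _ => ?_
      have : (fun r => i r + δ' r * (j r).val)
          = fun r => i r + ((fun r => δ' r - 1) r + 1) * (j r).val := by
        funext s
        have h : δ' s - 1 + 1 = δ' s := by have := hδ1 s; omega
        show i s + δ' s * (j s).val = i s + (δ' s - 1 + 1) * (j s).val
        rw [h]
      rw [this]
  rw [hset]
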